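/- Let S be a finite set and let μ₁, μ₂ be probability measures on {0,1}^S assigning positive probability to every configuration, with μ₂ monotone. Set A := inf over s ∈ S and ξ ∈ {0,1}^{S∖{s}} of [μ₂(σ(s)=1 | σ ≡ ξ on S∖{s}) − μ₁(σ(s)=1 | σ ≡ ξ on S∖{s})], and assume A > 0. Then for every ε ∈ (0,1) satisfying A > 1/(1−ε) − 1, one has μ₁ ≼ μ₂^{(-,ε)}. -/

import Mathlib

/-!
Statement 0 (Lemma 3.1 of Broman–Steif): for a monotone, fully supported probability
measure `μ` on `{0,1}^S` (`S` finite) and `ε ∈ (0,1)`, the conditional probabilities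
of the downward (resp. upward) `ε`-perturbation satisfy
`μ^{(-,ε)}(1|ξ) ≥ (1-ε) μ(1|ξ)` and `μ^{(+,ε)}(0|ξ) ≥ (1-ε) μ(0|ξ)`.

Configurations on a finite set `S` are functions `S → Bool` (`true` = 1, `false` = 0),
probability measures are represented by their weight functions.
-/

open Finset

variable {S : Type*} [Fintype S] [DecidableEq S]

/-- `μ` is a probability weight assigning positive probability to every configuration. -/
def IsProbWeight (μ : (S → Bool) → ℝ) : Prop :=
  (∀ σ, 0 < μ σ) ∧ ∑ σ : S → Bool, μ σ = 1

/-- The conditional probability `μ(σ(s) = 1 | σ ≡ ξ off s)`. -/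
noncomputable def condOne (μ : (S → Bool) → ℝ) (s : S) (ξ : S → Bool) : ℝ :=
  μ (Function.update ξ s true) /
    (μ (Function.update ξ s true) + μ (Function.update ξ s false))

/-- The conditional probability `μ(σ(s) = 0 | σ ≡ ξ off s)`. -/
noncomputable def condZero (μ : (S → Bool) → ℝ) (s : S) (ξ : S → Bool) : ℝ :=
  μ (Function.update ξ s false) /
    (μ (Function.update ξ s true) + μ (Function.update ξ s false))

/-- `μ` is monotone: the conditional probability of a 1 at `s` is nondecreasing in the
configuration off `s`. -/
def IsMonotoneWeight (μ : (S → Bool) → ℝ) : Prop :=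
  ∀ s : S, ∀ ξ ξ' : S → Bool, (∀ t, t ≠ s → ξ t ≤ ξ' t) →
    condOne μ s ξ ≤ condOne μ s ξ'

/-- The weight function of `μ^{(-,ε)}`: the law of `s ↦ min (X s) (Z s)` where `X ∼ μ`
and, independently, the `Z s` are i.i.d. with `P(Z s = 1) = 1 - ε`. -/
noncomputable def minusEps (μ : (S → Bool) → ℝ) (ε : ℝ) : (S → Bool) → ℝ := fun η =>
  ∑ σ : S → Bool, μ σ *
    ∏ s : S, (if η s then (if σ s then 1 - ε else 0) else (if σ s then ε else 1))

/-- The weight function of `μ^{(+,ε)}`: the law of `s ↦ max (X s) (Z s)` where `X ∼ μ`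
and, independently, the `Z s` are i.i.d. with `P(Z s = 1) = ε`. -/
noncomputable def plusEps (μ : (S → Bool) → ℝ) (ε : ℝ) : (S → Bool) → ℝ := fun η =>
  ∑ σ : S → Bool, μ σ *
    ∏ s : S, (if η s then (if σ s then 1 else ε) else (if σ s then 0 else 1 - ε))

/-- Stochastic domination `μ ≼ ν` for weight functions on `{0,1}^S`, `S` finite:
`∑ f dμ ≤ ∑ f dν` for every nondecreasing `f` (coordinatewise order, `false < true`). -/
def Dominates (μ ν : (S → Bool) → ℝ) : Prop :=
  ∀ f : (S → Bool) → ℝ, Monotone f →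
    ∑ σ : S → Bool, μ σ * f σ ≤ ∑ σ : S → Bool, ν σ * f σ

/-- The single-site domination condition. -/
def Hcond (μ ν : (S → Bool) → ℝ) : Prop :=
  ∀ s : S, ∀ ξ ξ' : S → Bool, (∀ t, t ≠ s → ξ t ≤ ξ' t) →
    condOne μ s ξ ≤ condOne ν s ξ'

lemma ratio_le_ratio_iff {x y z w : ℝ} (hx : 0 < x) (hy : 0 < y) (hz : 0 < z) (hw : 0 < w) :
    x/(x+y) ≤ z/(z+w) ↔ x*w ≤ z*y := by
  rw [div_le_div_iff₀ (by positivity) (by positivity)]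
  constructor <;> intro h <;> nlinarith

lemma quad (x y u v : ℝ) (px : 0 < x)
    (h8 : x*y ≤ u*v) (h9 : y ≤ v) (h10 : x ≤ v) :
    x + y ≤ u + v := by
  rcases le_or_gt x u with h | h
  · linarith
  · have key : x*(x+y) ≤ x*(u+v) := by
      nlinarith [mul_nonneg (sub_nonneg.2 h.le) (sub_nonneg.2 h10)]
    exact le_of_mul_le_mul_left key px

lemma eightvar (a0 a1 b0 b1 A0 A1 B0 B1 : ℝ)
    (pa0 : 0 < a0) (pa1 : 0 < a1) (pb0 : 0 < b0) (pb1 : 0 < b1)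
    (pA0 : 0 < A0) (pA1 : 0 < A1) (pB0 : 0 < B0) (pB1 : 0 < B1)
    (h1 : a0*B0 ≤ A0*b0) (h2 : a1*B1 ≤ A1*b1) (h3 : a0*B1 ≤ A1*b0)
    (h4 : a1*A0 ≤ A1*a0) (h5 : b1*B0 ≤ B1*b0) :
    (a0+a1)*(B0+B1) ≤ (A0+A1)*(b0+b1) := by
  have hx : a1*B0 ≤ A1*b0 := by
    have : (a1*B0)*A0 ≤ (A1*b0)*A0 := by
      nlinarith [mul_le_mul h4 h1 (by positivity) (by positivity)]
    exact le_of_mul_le_mul_right this pA0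
  have hq := quad (a1*B0) (a0*B1) (A0*b1) (A1*b0) (by positivity)
    (by nlinarith [mul_le_mul h1 h2 (by positivity) (by positivity)])
    h3 hx
  nlinarith

section fin

variable {n : ℕ}

lemma sum_succ (g : (Fin (n+1) → Bool) → ℝ) :
    ∑ σ : Fin (n+1) → Bool, g σ =
      (∑ η : Fin n → Bool, g (Fin.cons true η)) + (∑ η : Fin n → Bool, g (Fin.cons false η)) := by
  rw [← Fintype.sum_equiv (Fin.consEquiv (fun _ => Bool))
      (fun p => g (Fin.cons p.1 p.2)) g (fun p => rfl)]
  rw [Fintype.sum_prod_type, Fintype.sum_bool]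

lemma cons_le_cons {b b' : Bool} {η η' : Fin n → Bool} (hb : b ≤ b') (h : η ≤ η') :
    (Fin.cons b η : Fin (n+1) → Bool) ≤ Fin.cons b' η' :=
  Fin.cons_le_cons.mpr ⟨hb, h⟩

lemma condOne_cons (μ : (Fin (n+1) → Bool) → ℝ) (b : Bool) (t : Fin n) (η : Fin n → Bool) :
    condOne (fun ζ => μ (Fin.cons b ζ)) t η = condOne μ t.succ (Fin.cons b η) := by
  simp only [condOne, Fin.cons_update]

lemma condOne_zero (μ : (Fin (n+1) → Bool) → ℝ) (b : Bool) (η : Fin n → Bool) :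
    condOne μ 0 (Fin.cons b η) =
      μ (Fin.cons true η) / (μ (Fin.cons true η) + μ (Fin.cons false η)) := by
  simp only [condOne, Fin.update_cons_zero]

lemma condOne_scale (μ : (S → Bool) → ℝ) (c : ℝ) (hc : c ≠ 0) (s : S) (ξ : S → Bool) :
    condOne (fun σ => μ σ / c) s ξ = condOne μ s ξ := by
  simp only [condOne, ← add_div]
  rw [div_div_div_cancel_right₀]
  exact hc

end fin

section fin2

variable {n : ℕ}

lemma ord_cons {t : Fin n} {b b' : Bool} {η η' : Fin n → Bool} (hb : b ≤ b')
    (hle : ∀ u, u ≠ t → η u ≤ η' u) :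
    ∀ w, w ≠ t.succ → (Fin.cons b η : Fin (n+1) → Bool) w ≤ (Fin.cons b' η' : Fin (n+1) → Bool) w := by
  intro w
  refine Fin.cases (motive := fun w => w ≠ t.succ → (Fin.cons b η : Fin (n+1) → Bool) w ≤ (Fin.cons b' η' : Fin (n+1) → Bool) w) ?_ ?_ w
  · intro _; simpa using hb
  · intro u hu
    simp only [Fin.cons_succ]
    exact hle u (fun e => hu (by rw [e]))

lemma ord_zero {t : Fin n} {τ τ' c c' : Bool} {η η' : Fin n → Bool} (hτ : τ ≤ τ')
    (hle : ∀ u, u ≠ t → η u ≤ η' u) :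
    ∀ w, w ≠ (0 : Fin (n+1)) →
      (Fin.cons c (Function.update η t τ) : Fin (n+1) → Bool) w ≤ (Fin.cons c' (Function.update η' t τ') : Fin (n+1) → Bool) w := by
  intro w
  refine Fin.cases (motive := fun w => w ≠ (0 : Fin (n+1)) → (Fin.cons c (Function.update η t τ) : Fin (n+1) → Bool) w ≤ (Fin.cons c' (Function.update η' t τ') : Fin (n+1) → Bool) w) ?_ ?_ w
  · intro h0; exact absurd rfl h0
  · intro u _
    simp only [Fin.cons_succ, Function.update_apply]
    by_cases hu : u = t
    · simp [hu, hτ]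
    · simp [hu]; exact hle u hu

lemma Hcond_marg {μ ν : (Fin (n+1) → Bool) → ℝ} (hμ : ∀ σ, 0 < μ σ) (hν : ∀ σ, 0 < ν σ)
    (h : Hcond μ ν) :
    Hcond (fun η => μ (Fin.cons true η) + μ (Fin.cons false η))
          (fun η => ν (Fin.cons true η) + ν (Fin.cons false η)) := by
  intro t η η' hle
  set a1 := μ (Fin.cons true (Function.update η t true)) with ha1
  set a0 := μ (Fin.cons false (Function.update η t true)) with ha0
  set b1 := μ (Fin.cons true (Function.update η t false)) with hb1
  set b0 := μ (Fin.cons false (Function.update η t false)) with hb0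
  set A1 := ν (Fin.cons true (Function.update η' t true)) with hA1
  set A0 := ν (Fin.cons false (Function.update η' t true)) with hA0
  set B1 := ν (Fin.cons true (Function.update η' t false)) with hB1
  set B0 := ν (Fin.cons false (Function.update η' t false)) with hB0
  have pa1 : 0 < a1 := hμ _
  have pa0 : 0 < a0 := hμ _
  have pb1 : 0 < b1 := hμ _
  have pb0 : 0 < b0 := hμ _
  have pA1 : 0 < A1 := hν _
  have pA0 : 0 < A0 := hν _
  have pB1 : 0 < B1 := hν _
  have pB0 : 0 < B0 := hν _
  -- h1 : a0*B0 ≤ A0*b0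
  have h1 : a0*B0 ≤ A0*b0 := by
    have := h t.succ (Fin.cons false η) (Fin.cons false η') (ord_cons le_rfl hle)
    rw [← condOne_cons, ← condOne_cons] at this
    simp only [condOne] at this
    exact (ratio_le_ratio_iff pa0 pb0 pA0 pB0).mp this
  have h2 : a1*B1 ≤ A1*b1 := by
    have := h t.succ (Fin.cons true η) (Fin.cons true η') (ord_cons le_rfl hle)
    rw [← condOne_cons, ← condOne_cons] at this
    simp only [condOne] at this
    exact (ratio_le_ratio_iff pa1 pb1 pA1 pB1).mp this
  have h3 : a0*B1 ≤ A1*b0 := by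
    have := h t.succ (Fin.cons false η) (Fin.cons true η') (ord_cons (by simp) hle)
    rw [← condOne_cons, ← condOne_cons] at this
    simp only [condOne] at this
    exact (ratio_le_ratio_iff pa0 pb0 pA1 pB1).mp this
  have h4 : a1*A0 ≤ A1*a0 := by
    have := h 0 (Fin.cons false (Function.update η t true))
      (Fin.cons false (Function.update η' t true)) (ord_zero le_rfl hle)
    rw [condOne_zero, condOne_zero] at this
    exact (ratio_le_ratio_iff pa1 pa0 pA1 pA0).mp this
  have h5 : b1*B0 ≤ B1*b0 := by
    have := h 0 (Fin.cons false (Function.update η t false))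
      (Fin.cons false (Function.update η' t false)) (ord_zero le_rfl hle)
    rw [condOne_zero, condOne_zero] at this
    exact (ratio_le_ratio_iff pb1 pb0 pB1 pB0).mp this
  have key := eightvar a0 a1 b0 b1 A0 A1 B0 B1 pa0 pa1 pb0 pb1 pA0 pA1 pB0 pB1 h1 h2 h3 h4 h5
  simp only [condOne]
  rw [show (a1 + a0) / (a1 + a0 + (b1 + b0)) = (a1+a0)/((a1+a0)+(b1+b0)) by ring_nf]
  have := (ratio_le_ratio_iff (x := a1+a0) (y := b1+b0) (z := A1+A0) (w := B1+B0)
    (by positivity) (by positivity) (by positivity) (by positivity)).mpr (by nlinarith)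
  convert this using 2 <;> ring

lemma Hcond_cond {μ ν : (Fin (n+1) → Bool) → ℝ} (h : Hcond μ ν) {b b' : Bool} (hb : b ≤ b')
    (c c' : ℝ) (hc : c ≠ 0) (hc' : c' ≠ 0) :
    Hcond (fun η => μ (Fin.cons b η) / c) (fun η => ν (Fin.cons b' η) / c') := by
  intro t η η' hle
  rw [condOne_scale (fun η => μ (Fin.cons b η)) c hc, condOne_scale (fun η => ν (Fin.cons b' η)) c' hc',
    condOne_cons, condOne_cons]
  exact h t.succ _ _ (ord_cons hb hle)

end fin2

theorem ghmFin : ∀ (n : ℕ) (μ ν : (Fin n → Bool) → ℝ), (∀ σ, 0 < μ σ) → (∀ σ, 0 < ν σ) →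
    (∑ σ : Fin n → Bool, μ σ) = 1 → (∑ σ : Fin n → Bool, ν σ) = 1 → Hcond μ ν →
    ∀ f : (Fin n → Bool) → ℝ, Monotone f →
      ∑ σ : Fin n → Bool, μ σ * f σ ≤ ∑ σ : Fin n → Bool, ν σ * f σ := by
  intro n
  induction n with
  | zero =>
    intro μ ν hμ hν hμ1 hν1 _ f _
    simp only [Fintype.sum_unique] at hμ1 hν1 ⊢
    rw [hμ1, hν1]
  | succ n ih =>
    intro μ ν hμ hν hμ1 hν1 h f hf
    classical
    have hPsum := hμ1; rw [sum_succ μ] at hPsum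
    have hQsum := hν1; rw [sum_succ ν] at hQsum
    set P1 := ∑ η : Fin n → Bool, μ (Fin.cons true η) with hP1def
    set P0 := ∑ η : Fin n → Bool, μ (Fin.cons false η) with hP0def
    set Q1 := ∑ η : Fin n → Bool, ν (Fin.cons true η) with hQ1def
    set Q0 := ∑ η : Fin n → Bool, ν (Fin.cons false η) with hQ0def
    have hP1 : 0 < P1 := Finset.sum_pos (fun _ _ => hμ _) univ_nonempty
    have hP0 : 0 < P0 := Finset.sum_pos (fun _ _ => hμ _) univ_nonempty
    have hQ1 : 0 < Q1 := Finset.sum_pos (fun _ _ => hν _) univ_nonempty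
    have hQ0 : 0 < Q0 := Finset.sum_pos (fun _ _ => hν _) univ_nonempty
    -- marginals
    set Mg : (Fin n → Bool) → ℝ := fun η => μ (Fin.cons true η) + μ (Fin.cons false η) with hMg
    set Ng : (Fin n → Bool) → ℝ := fun η => ν (Fin.cons true η) + ν (Fin.cons false η) with hNg
    have hMgpos : ∀ η, 0 < Mg η := fun η => add_pos (hμ _) (hμ _)
    have hNgpos : ∀ η, 0 < Ng η := fun η => add_pos (hν _) (hν _)
    have hMg1 : (∑ η : Fin n → Bool, Mg η) = 1 := by
      rw [hMg]; rw [Finset.sum_add_distrib]; exact hPsum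
    have hNg1 : (∑ η : Fin n → Bool, Ng η) = 1 := by
      rw [hNg]; rw [Finset.sum_add_distrib]; exact hQsum
    have hdomMg := ih Mg Ng hMgpos hNgpos hMg1 hNg1 (Hcond_marg hμ hν h)
    -- conditional dominations
    have hcc : ∀ (b b' : Bool) (cb cb' : ℝ), b ≤ b' → 0 < cb → 0 < cb' →
        (∑ η : Fin n → Bool, μ (Fin.cons b η)) = cb →
        (∑ η : Fin n → Bool, ν (Fin.cons b' η)) = cb' →
        ∀ g : (Fin n → Bool) → ℝ, Monotone g →
        ∑ η : Fin n → Bool, (μ (Fin.cons b η)/cb) * g η ≤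
          ∑ η : Fin n → Bool, (ν (Fin.cons b' η)/cb') * g η := by
      intro b b' cb cb' hb hcb hcb' hsb hsb' g hg
      exact ih _ _ (fun η => div_pos (hμ _) hcb) (fun η => div_pos (hν _) hcb')
        (by rw [← Finset.sum_div, hsb, div_self hcb.ne'])
        (by rw [← Finset.sum_div, hsb', div_self hcb'.ne'])
        (Hcond_cond h hb cb cb' hcb.ne' hcb'.ne') g hg
    -- marginal inequality P1 ≤ Q1
    set cm : (Fin n → Bool) → ℝ := fun η => condOne μ 0 (Fin.cons false η) with hcm
    set cn : (Fin n → Bool) → ℝ := fun η => condOne ν 0 (Fin.cons false η) with hcn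
    have htermp : ∀ η, Mg η * cm η = μ (Fin.cons true η) := by
      intro η
      rw [hcm]
      simp only [condOne_zero]
      rw [hMg]
      have h0 : μ (Fin.cons true η) + μ (Fin.cons false η) ≠ 0 := (add_pos (hμ _) (hμ _)).ne'
      field_simp
    have htermq : ∀ η, Ng η * cn η = ν (Fin.cons true η) := by
      intro η
      rw [hcn]
      simp only [condOne_zero]
      rw [hNg]
      have h0 : ν (Fin.cons true η) + ν (Fin.cons false η) ≠ 0 := (add_pos (hν _) (hν _)).ne'
      field_simp
    set Gg : (Fin n → Bool) → ℝ :=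
      fun η => (Finset.univ.filter (fun x => x ≤ η)).sup' ⟨η, by simp⟩ cm with hGg
    have hGmono : Monotone Gg := by
      intro x y hxy
      apply Finset.sup'_le
      intro z hz
      apply Finset.le_sup'
      simp only [Finset.mem_filter] at hz ⊢
      exact ⟨Finset.mem_univ z, le_trans hz.2 hxy⟩
    have hcle : ∀ η, cm η ≤ Gg η := fun η => Finset.le_sup' cm (by simp)
    have hGle : ∀ η, Gg η ≤ cn η := by
      intro η
      apply Finset.sup'_le
      intro z hz
      simp only [Finset.mem_filter] at hz
      exact h 0 (Fin.cons false z) (Fin.cons false η)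
        (fun w _ => cons_le_cons le_rfl hz.2 w)
    have hPQ : P1 ≤ Q1 := by
      calc P1 = ∑ η : Fin n → Bool, Mg η * cm η := by
            rw [hP1def]; exact (Finset.sum_congr rfl (fun η _ => (htermp η).symm))
        _ ≤ ∑ η : Fin n → Bool, Mg η * Gg η :=
            Finset.sum_le_sum (fun η _ => mul_le_mul_of_nonneg_left (hcle η) (hMgpos η).le)
        _ ≤ ∑ η : Fin n → Bool, Ng η * Gg η := hdomMg Gg hGmono
        _ ≤ ∑ η : Fin n → Bool, Ng η * cn η :=
            Finset.sum_le_sum (fun η _ => mul_le_mul_of_nonneg_left (hGle η) (hNgpos η).le)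
        _ = Q1 := Finset.sum_congr rfl (fun η _ => htermq η)
    -- conditional expectations
    set F0m := ∑ η : Fin n → Bool, (μ (Fin.cons false η)/P0) * f (Fin.cons false η) with hF0m
    set F1m := ∑ η : Fin n → Bool, (μ (Fin.cons true η)/P1) * f (Fin.cons true η) with hF1m
    set F0n := ∑ η : Fin n → Bool, (ν (Fin.cons false η)/Q0) * f (Fin.cons false η) with hF0n
    set F1n := ∑ η : Fin n → Bool, (ν (Fin.cons true η)/Q1) * f (Fin.cons true η) with hF1n
    have hf0 : Monotone (fun η : Fin n → Bool => f (Fin.cons false η)) :=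
      fun x y hxy => hf (cons_le_cons le_rfl hxy)
    have hf1 : Monotone (fun η : Fin n → Bool => f (Fin.cons true η)) :=
      fun x y hxy => hf (cons_le_cons le_rfl hxy)
    have hF00 : F0m ≤ F0n := hcc false false P0 Q0 le_rfl hP0 hQ0 rfl rfl _ hf0
    have hF11 : F1m ≤ F1n := hcc true true P1 Q1 le_rfl hP1 hQ1 rfl rfl _ hf1
    have hF01 : F0m ≤ F1n := by
      calc F0m ≤ ∑ η : Fin n → Bool, (ν (Fin.cons true η)/Q1) * f (Fin.cons false η) :=
            hcc false true P0 Q1 (by simp) hP0 hQ1 rfl rfl _ hf0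
        _ ≤ F1n := Finset.sum_le_sum (fun η _ => by
            exact mul_le_mul_of_nonneg_left (hf (cons_le_cons (by simp) le_rfl))
              (div_nonneg (hν _).le hQ1.le))
    -- assemble
    rw [sum_succ (fun σ => μ σ * f σ), sum_succ (fun σ => ν σ * f σ)]
    have hμrw1 : ∑ η : Fin n → Bool, μ (Fin.cons true η) * f (Fin.cons true η) = P1 * F1m := by
      rw [hF1m, Finset.mul_sum]
      refine Finset.sum_congr rfl (fun η _ => ?_)
      field_simp
    have hμrw0 : ∑ η : Fin n → Bool, μ (Fin.cons false η) * f (Fin.cons false η) = P0 * F0m := by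
      rw [hF0m, Finset.mul_sum]
      refine Finset.sum_congr rfl (fun η _ => ?_)
      field_simp
    have hνrw1 : ∑ η : Fin n → Bool, ν (Fin.cons true η) * f (Fin.cons true η) = Q1 * F1n := by
      rw [hF1n, Finset.mul_sum]
      refine Finset.sum_congr rfl (fun η _ => ?_)
      field_simp
    have hνrw0 : ∑ η : Fin n → Bool, ν (Fin.cons false η) * f (Fin.cons false η) = Q0 * F0n := by
      rw [hF0n, Finset.mul_sum]
      refine Finset.sum_congr rfl (fun η _ => ?_)
      field_simp
    rw [hμrw1, hμrw0, hνrw1, hνrw0]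
    have hP0eq : P0 = Q0 + (Q1 - P1) := by linarith
    rw [hP0eq]
    nlinarith [mul_le_mul_of_nonneg_left hF00 hQ0.le,
      mul_le_mul_of_nonneg_left hF01 (sub_nonneg.2 hPQ),
      mul_le_mul_of_nonneg_left hF11 hP1.le]

section transfer

variable {S : Type*} [Fintype S] [DecidableEq S]

lemma sum_reindex (e : S ≃ Fin (Fintype.card S)) (F : (S → Bool) → ℝ) :
    ∑ η : Fin (Fintype.card S) → Bool, F (fun s => η (e s)) = ∑ σ : S → Bool, F σ := by
  apply Fintype.sum_equiv (Equiv.arrowCongr e.symm (Equiv.refl Bool))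
  intro η
  congr 1

lemma condOne_reindex (e : S ≃ Fin (Fintype.card S)) (μ : (S → Bool) → ℝ)
    (i : Fin (Fintype.card S)) (ζ : Fin (Fintype.card S) → Bool) :
    condOne (fun η => μ (fun s => η (e s))) i ζ = condOne μ (e.symm i) (fun s => ζ (e s)) := by
  have key : ∀ c : Bool, (fun s => Function.update ζ i c (e s)) =
      Function.update (fun s => ζ (e s)) (e.symm i) c := by
    intro c
    have := Function.update_comp_equiv ζ e i c
    funext s
    exact congrFun this s
  simp only [condOne, key]

theorem ghm (μ ν : (S → Bool) → ℝ) (hμ : ∀ σ, 0 < μ σ) (hν : ∀ σ, 0 < ν σ)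
    (hμ1 : ∑ σ : S → Bool, μ σ = 1) (hν1 : ∑ σ : S → Bool, ν σ = 1)
    (h : Hcond μ ν) :
    ∀ f : (S → Bool) → ℝ, Monotone f →
      ∑ σ : S → Bool, μ σ * f σ ≤ ∑ σ : S → Bool, ν σ * f σ := by
  classical
  intro f hf
  set e : S ≃ Fin (Fintype.card S) := Fintype.equivFin S with he
  set μ' : (Fin (Fintype.card S) → Bool) → ℝ := fun η => μ (fun s => η (e s)) with hμ'
  set ν' : (Fin (Fintype.card S) → Bool) → ℝ := fun η => ν (fun s => η (e s)) with hν'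
  set f' : (Fin (Fintype.card S) → Bool) → ℝ := fun η => f (fun s => η (e s)) with hf'
  have hf'mono : Monotone f' := by
    intro x y hxy
    exact hf (fun s => hxy (e s))
  have hH : Hcond μ' ν' := by
    intro i ζ ζ' hle
    rw [hμ', hν', condOne_reindex, condOne_reindex]
    apply h (e.symm i)
    intro t ht
    apply hle
    intro hcon
    apply ht
    rw [← hcon, Equiv.symm_apply_apply]
  have := ghmFin (Fintype.card S) μ' ν'
    (fun η => hμ _) (fun η => hν _)
    (by rw [hμ']; exact (sum_reindex e μ).trans hμ1)
    (by rw [hν']; exact (sum_reindex e ν).trans hν1)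
    hH f' hf'mono
  calc ∑ σ : S → Bool, μ σ * f σ
      = ∑ η : Fin (Fintype.card S) → Bool, μ' η * f' η :=
        (sum_reindex e (fun σ => μ σ * f σ)).symm
    _ ≤ ∑ η : Fin (Fintype.card S) → Bool, ν' η * f' η := this
    _ = ∑ σ : S → Bool, ν σ * f σ := sum_reindex e (fun σ => ν σ * f σ)

end transfer

section minus

variable {S : Type*} [Fintype S] [DecidableEq S]

lemma minusEps_pos {μ : (S → Bool) → ℝ} (hμ : ∀ σ, 0 < μ σ) {ε : ℝ} (hε0 : 0 < ε) (hε1 : ε < 1)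
    (η : S → Bool) : 0 < minusEps μ ε η := by
  apply Finset.sum_pos'
  · intro σ _
    apply mul_nonneg (hμ σ).le
    apply Finset.prod_nonneg
    intro t _
    by_cases h1 : η t <;> by_cases h2 : σ t <;> simp [h1, h2] <;> linarith
  · refine ⟨(fun _ => true), Finset.mem_univ _, ?_⟩
    apply mul_pos (hμ _)
    apply Finset.prod_pos
    intro t _
    by_cases h1 : η t <;> simp [h1] <;> linarith

lemma minusEps_sum {μ : (S → Bool) → ℝ} (hμ1 : ∑ σ : S → Bool, μ σ = 1) {ε : ℝ} :
    ∑ η : S → Bool, minusEps μ ε η = 1 := by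
  unfold minusEps
  rw [Finset.sum_comm]
  have key : ∀ σ : S → Bool,
      (∑ η : S → Bool, μ σ *
        ∏ t : S, (if η t then (if σ t then 1 - ε else 0) else (if σ t then ε else 1))) = μ σ := by
    intro σ
    rw [← Finset.mul_sum]
    have h2 := Finset.sum_prod_piFinset (Finset.univ : Finset Bool)
      (fun (t : S) (b : Bool) => if b then (if σ t then 1 - ε else 0) else (if σ t then ε else 1))
    rw [Fintype.piFinset_univ] at h2
    rw [h2]
    have : ∀ t : S, (∑ b : Bool, (if b then (if σ t then 1 - ε else 0) else (if σ t then ε else 1))) = 1 := by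
      intro t
      rw [Fintype.sum_bool]
      by_cases h : σ t <;> simp [h]
    rw [Finset.prod_congr rfl (fun t _ => this t), Finset.prod_const_one, mul_one]
  rw [Finset.sum_congr rfl (fun σ _ => key σ), hμ1]

end minus

section key

variable {S : Type*} [Fintype S] [DecidableEq S]

lemma condOne_minusEps {μ : (S → Bool) → ℝ} (hμ : ∀ σ, 0 < μ σ)
    (hmono : IsMonotoneWeight μ) {ε : ℝ} (hε0 : 0 < ε) (hε1 : ε < 1) (s : S) (ξ : S → Bool) :
    (1 - ε) * condOne μ s ξ ≤ condOne (minusEps μ ε) s ξ := by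
  classical
  set W : (S → Bool) → ℝ := fun σ =>
    ∏ t ∈ Finset.univ.erase s, (if ξ t then (if σ t then 1 - ε else 0) else (if σ t then ε else 1))
    with hWdef
  have hWnn : ∀ σ, 0 ≤ W σ := by
    intro σ
    apply Finset.prod_nonneg
    intro t _
    by_cases h1 : ξ t <;> by_cases h2 : σ t <;> simp [h1, h2] <;> linarith
  set M1 := ∑ σ : S → Bool, (if σ s then μ σ * W σ else 0) with hM1def
  set M0 := ∑ σ : S → Bool, (if σ s then 0 else μ σ * W σ) with hM0def
  -- the two values of the perturbed measure
  have hup : minusEps μ ε (Function.update ξ s true) = (1 - ε) * M1 := by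
    unfold minusEps
    rw [hM1def, Finset.mul_sum]
    apply Finset.sum_congr rfl
    intro σ _
    rw [← Finset.mul_prod_erase Finset.univ _ (Finset.mem_univ s)]
    have hprod : (∏ t ∈ Finset.univ.erase s,
        (if Function.update ξ s true t then (if σ t then 1 - ε else 0) else (if σ t then ε else 1)))
        = W σ :=
      Finset.prod_congr rfl (fun t ht => by rw [Function.update_of_ne (Finset.mem_erase.mp ht).1])
    rw [hprod, Function.update_self]
    by_cases h : σ s <;> simp [h] <;> ring
  have hdown : minusEps μ ε (Function.update ξ s false) = ε * M1 + M0 := by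
    unfold minusEps
    rw [hM1def, hM0def, Finset.mul_sum, ← Finset.sum_add_distrib]
    apply Finset.sum_congr rfl
    intro σ _
    rw [← Finset.mul_prod_erase Finset.univ _ (Finset.mem_univ s)]
    have hprod : (∏ t ∈ Finset.univ.erase s,
        (if Function.update ξ s false t then (if σ t then 1 - ε else 0) else (if σ t then ε else 1)))
        = W σ :=
      Finset.prod_congr rfl (fun t ht => by rw [Function.update_of_ne (Finset.mem_erase.mp ht).1])
    rw [hprod, Function.update_self]
    by_cases h : σ s <;> simp [h] <;> ring
  have hM1pos : 0 < M1 := by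
    rw [hM1def]
    apply Finset.sum_pos'
    · intro σ _
      by_cases h : σ s <;> simp [h]
      exact mul_nonneg (hμ σ).le (hWnn σ)
    · refine ⟨(fun _ => true), Finset.mem_univ _, ?_⟩
      simp only [if_true]
      apply mul_pos (hμ _)
      rw [hWdef]
      apply Finset.prod_pos
      intro t _
      by_cases h1 : ξ t <;> simp [h1] <;> linarith
  have hM0nn : 0 ≤ M0 := by
    rw [hM0def]
    apply Finset.sum_nonneg
    intro σ _
    by_cases h : σ s <;> simp [h]
    exact mul_nonneg (hμ σ).le (hWnn σ)
  set c := condOne μ s ξ with hcdef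
  -- doubling identities
  have hWflip : ∀ (σ : S → Bool) (b : Bool), W (Function.update σ s b) = W σ := by
    intro σ b
    apply Finset.prod_congr rfl
    intro t ht
    rw [Function.update_of_ne (Finset.mem_erase.mp ht).1]
  have flip_invol : Function.Involutive (fun σ : S → Bool => Function.update σ s (!(σ s))) := by
    intro σ
    funext t
    by_cases ht : t = s
    · subst ht; simp
    · simp [Function.update_of_ne ht]
  have hdouble : ∀ b : Bool,
      (∑ σ : S → Bool, μ (Function.update σ s b) * W σ)
      = 2 * ∑ σ : S → Bool, (if σ s = b then μ σ * W σ else 0) := by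
    intro b
    have hsplit : ∀ σ : S → Bool, μ (Function.update σ s b) * W σ =
        (if σ s = b then μ (Function.update σ s b) * W σ else 0)
        + (if σ s = b then 0 else μ (Function.update σ s b) * W σ) := by
      intro σ
      by_cases h : σ s = b <;> simp [h]
    rw [Finset.sum_congr rfl (fun σ _ => hsplit σ), Finset.sum_add_distrib]
    have e1 : (∑ σ : S → Bool, (if σ s = b then μ (Function.update σ s b) * W σ else 0))
        = ∑ σ : S → Bool, (if σ s = b then μ σ * W σ else 0) := by
      apply Finset.sum_congr rfl
      intro σ _
      by_cases h : σ s = b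
      · have h2 : Function.update σ s b = σ := by rw [← h]; exact Function.update_eq_self s σ
        simp [h, h2]
      · simp [h]
    have e2 : (∑ σ : S → Bool, (if σ s = b then 0 else μ (Function.update σ s b) * W σ))
        = ∑ σ : S → Bool, (if σ s = b then μ σ * W σ else 0) := by
      apply Fintype.sum_equiv (flip_invol.toPerm _)
      intro σ
      have happ : (flip_invol.toPerm _) σ = Function.update σ s (!(σ s)) := rfl
      rw [happ, hWflip]
      have hs2 : Function.update σ s (!(σ s)) s = !(σ s) := Function.update_self _ _ _
      by_cases h : σ s = b
      · rw [hs2]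
        have : (!(σ s)) ≠ b := by rw [h]; cases b <;> simp
        simp [h, this]
      · have hb : σ s = !b := by revert h; cases b <;> cases hσs : σ s <;> simp
        have hnb : (!(σ s)) = b := by rw [hb]; simp
        rw [hs2, hnb]
        simp [h, hnb]
    rw [e1, e2]; ring
  -- termwise inequality
  have hkey2 : c * ((∑ σ : S → Bool, μ (Function.update σ s true) * W σ)
        + (∑ σ : S → Bool, μ (Function.update σ s false) * W σ))
      ≤ ∑ σ : S → Bool, μ (Function.update σ s true) * W σ := by
    rw [← Finset.sum_add_distrib, Finset.mul_sum]
    apply Finset.sum_le_sum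
    intro σ _
    rcases eq_or_lt_of_le (hWnn σ) with h0 | hpos
    · rw [← h0]; simp
    · have hord : ∀ t, t ≠ s → ξ t ≤ σ t := by
        intro t ht
        by_contra hcon
        have hξt : ξ t = true := by revert hcon; cases hξ : ξ t <;> cases hσ : σ t <;> simp
        have hσt : σ t = false := by revert hcon; cases hξ : ξ t <;> cases hσ : σ t <;> simp
        have hz : W σ = 0 := by
          rw [hWdef]
          exact Finset.prod_eq_zero (Finset.mem_erase.mpr ⟨ht, Finset.mem_univ t⟩)
            (by simp [hξt, hσt])
        rw [hz] at hpos; exact lt_irrefl 0 hpos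
      have hc := hmono s ξ σ hord
      rw [← hcdef] at hc
      rw [condOne] at hc
      have hu := hμ (Function.update σ s true)
      have hv := hμ (Function.update σ s false)
      have hc2 := (le_div_iff₀ (by positivity :
        (0:ℝ) < μ (Function.update σ s true) + μ (Function.update σ s false))).mp hc
      nlinarith [mul_le_mul_of_nonneg_right hc2 (hWnn σ)]
  -- convert the doubling to M1, M0
  have hd1 : (∑ σ : S → Bool, μ (Function.update σ s true) * W σ) = 2 * M1 := by
    rw [hdouble true, hM1def]
  have hd0 : (∑ σ : S → Bool, μ (Function.update σ s false) * W σ) = 2 * M0 := by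
    rw [hdouble false, hM0def]
    congr 1
    apply Finset.sum_congr rfl
    intro σ _
    cases h : σ s <;> simp [h]
  have hkey : c * (M1 + M0) ≤ M1 := by
    rw [hd1, hd0] at hkey2
    linarith
  -- conclude
  have hcond : condOne (minusEps μ ε) s ξ = (1 - ε) * M1 / (M1 + M0) := by
    rw [condOne, hup, hdown, show (1-ε)*M1 + (ε*M1 + M0) = M1 + M0 from by ring]
  rw [hcond, mul_div_assoc]
  apply mul_le_mul_of_nonneg_left ?_ (by linarith : (0:ℝ) ≤ 1 - ε)
  rw [le_div_iff₀ (by linarith : (0:ℝ) < M1 + M0)]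
  exact hkey

end key

theorem lemma33 (μ₁ μ₂ : (S → Bool) → ℝ) (h₁ : IsProbWeight μ₁) (h₂ : IsProbWeight μ₂)
    (hmono : IsMonotoneWeight μ₂) (A : ℝ)
    (hA : A = sInf {x : ℝ | ∃ (s : S) (ξ : S → Bool), x = condOne μ₂ s ξ - condOne μ₁ s ξ})
    (hApos : 0 < A) (ε : ℝ) (hε : ε ∈ Set.Ioo (0 : ℝ) 1)
    (hεA : 1 / (1 - ε) - 1 < A) :
    Dominates μ₁ (minusEps μ₂ ε) := by
  obtain ⟨hε0, hε1⟩ := hε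
  obtain ⟨hμ1pos, hμ1sum⟩ := h₁
  obtain ⟨hμ2pos, hμ2sum⟩ := h₂
  have h1ε : (0:ℝ) < 1 - ε := by linarith
  have hH : Hcond μ₁ (minusEps μ₂ ε) := by
    intro s ξ ξ' hle
    have hAle : A ≤ condOne μ₂ s ξ - condOne μ₁ s ξ := by
      rw [hA]
      have hfin : {x : ℝ | ∃ (s : S) (ξ : S → Bool), x = condOne μ₂ s ξ - condOne μ₁ s ξ}.Finite := by
        have hr : {x : ℝ | ∃ (s : S) (ξ : S → Bool), x = condOne μ₂ s ξ - condOne μ₁ s ξ}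
            = Set.range (fun p : S × (S → Bool) => condOne μ₂ p.1 p.2 - condOne μ₁ p.1 p.2) := by
          ext x
          simp only [Set.mem_setOf_eq, Set.mem_range, Prod.exists]
          constructor
          · rintro ⟨s, ξ, rfl⟩; exact ⟨s, ξ, rfl⟩
          · rintro ⟨s, ξ, rfl⟩; exact ⟨s, ξ, rfl⟩
        rw [hr]; exact Set.finite_range _
      exact csInf_le hfin.bddBelow ⟨s, ξ, rfl⟩
    have hc1 : condOne μ₁ s ξ ≤ 1 := by
      rw [condOne]
      have ha := hμ1pos (Function.update ξ s true)
      have hb := hμ1pos (Function.update ξ s false)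
      rw [div_le_one (by linarith)]; linarith
    have hεA' : ε < (1 - ε) * A := by
      have heq : 1/(1-ε) - 1 = ε/(1-ε) := by field_simp; ring
      rw [heq] at hεA
      have := (div_lt_iff₀ h1ε).mp hεA
      linarith
    have hchain1 : condOne μ₁ s ξ ≤ (1 - ε) * condOne μ₂ s ξ := by
      nlinarith [mul_le_mul_of_nonneg_left
        (by linarith [hAle] : condOne μ₁ s ξ + A ≤ condOne μ₂ s ξ)
        (by linarith : (0:ℝ) ≤ 1 - ε), hc1, hεA']
    have hchain2 : (1 - ε) * condOne μ₂ s ξ ≤ (1 - ε) * condOne μ₂ s ξ' :=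
      mul_le_mul_of_nonneg_left (hmono s ξ ξ' hle) (by linarith)
    have hchain3 := condOne_minusEps hμ2pos hmono hε0 hε1 s ξ'
    linarith
  exact ghm μ₁ (minusEps μ₂ ε) hμ1pos (minusEps_pos hμ2pos hε0 hε1)
    hμ1sum (minusEps_sum hμ2sum) hH
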